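/- The cylinder Σ(r) = M × ∂D(r) ⊂ M × ℝ^k is strictly O(k)-stable if and only if r² > k / λ₁(M), where λ₁(M) is the first positive eigenvalue of the Laplacian on M. -/

import Mathlib

open MeasureTheory Metric Set
open scoped ENNReal

noncomputable section

/-- the cylinder `Σ(r) = M × ∂D(r) ⊂ M × ℝ^k` is strictly `O(k)`-stable if
and only if `r² > k / λ₁(M)`.

`O(k)`-invariant functions on `Σ(r)` are identified with functions `u : M → ℝ`; since
`q = k / r²` on `Σ(r)` and the area element is the constant `k ω_k r^{k-1}` times that of
`M`, strict `O(k)`-stability reads: there is `λ > 0` with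
`∫_M (|∇u|² − (k/r²) u²) ≥ λ ∫_M u²` for every mean-zero `u`.  The Riemannian structure of
`M` enters only through the gradient-norm operator `G u = |∇_M u|` on a measure space
`(M, μ)`, and `λ₁(M)` is characterized variationally: it is a lower bound for the Rayleigh
quotient of mean-zero functions (`hlow`), and it is the optimal such bound (`hsharp`). -/
theorem stmt15 {M : Type*} [MeasurableSpace M] (μ : Measure M) [IsFiniteMeasure μ]
    (G : (M → ℝ) → M → ℝ)
    (k : ℕ) (hk : 0 < k) (r : ℝ) (hr : 0 < r)
    (lam1 : ℝ) (hlam1pos : 0 < lam1)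
    (hlow : ∀ u : M → ℝ, Integrable u μ → (∫ p, u p ∂μ) = 0 →
      lam1 * ∫ p, (u p) ^ 2 ∂μ ≤ ∫ p, (G u p) ^ 2 ∂μ)
    (hsharp : ∀ ε : ℝ, 0 < ε → ∃ u : M → ℝ, Integrable u μ ∧ (∫ p, u p ∂μ) = 0 ∧
      0 < (∫ p, (u p) ^ 2 ∂μ) ∧
      (∫ p, (G u p) ^ 2 ∂μ) < (lam1 + ε) * ∫ p, (u p) ^ 2 ∂μ) :
    (∃ lam : ℝ, 0 < lam ∧ ∀ u : M → ℝ, Integrable u μ → (∫ p, u p ∂μ) = 0 →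
        lam * ∫ p, (u p) ^ 2 ∂μ ≤
          (∫ p, (G u p) ^ 2 ∂μ) - (k / r ^ 2) * ∫ p, (u p) ^ 2 ∂μ) ↔
      r ^ 2 > k / lam1 := by
  have hr2 : (0:ℝ) < r ^ 2 := by positivity
  constructor
  · rintro ⟨lam, hlam, hstab⟩
    -- show lam ≤ lam1 - k/r²
    have key : lam + k / r ^ 2 ≤ lam1 := by
      by_contra h
      push_neg at h
      set ε := lam + k / r ^ 2 - lam1 with hε
      have hεpos : 0 < ε := by simp [hε]; linarith
      obtain ⟨u, hui, hu0, hupos, hub⟩ := hsharp ε hεpos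
      have h1 := hstab u hui hu0
      rw [hε] at hub
      nlinarith [h1, hub, hupos]
    have hk' : (0:ℝ) < k := by exact_mod_cast hk
    have : k / r ^ 2 < lam1 := by linarith
    rw [gt_iff_lt, div_lt_iff₀ hlam1pos]
    rw [div_lt_iff₀ hr2] at this
    nlinarith
  · intro h
    rw [gt_iff_lt, div_lt_iff₀ hlam1pos] at h
    have hlt : k / r ^ 2 < lam1 := by
      rw [div_lt_iff₀ hr2]; nlinarith
    refine ⟨lam1 - k / r ^ 2, by linarith, fun u hui hu0 => ?_⟩
    have := hlow u hui hu0
    nlinarith [sq_nonneg (∫ p, u p ∂μ), integral_nonneg (f := fun p => (u p) ^ 2) (fun p => sq_nonneg (u p)) (μ := μ)]
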